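/- (Counting form of the random-walk lemma) Let g, h : ℕ → ℕ with 1 ≤ g(n) ≤ h(n) for all n. Let T be a tree containing the empty string such that every τ ∈ T has exactly h(|τ|) immediate extensions in T (in particular T is infinite and has no leaves), and let B be a set of strings that is g-small above the empty string. Then for every n, the number of strings σ ∈ T with |σ| = n such that no prefix of σ belongs to B is at least ∏_{i<n} (h(i) − g(i)). -/

import Mathlib

/-- A tree is a set of strings (finite sequences of naturals) closed under prefixes. -/
def IsTree (T : Set (List ℕ)) : Prop :=
  ∀ σ ∈ T, ∀ τ : List ℕ, τ <+: σ → τ ∈ T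

/-- A leaf of `T` is an element of `T` with no immediate extension in `T`. -/
def IsLeaf (T : Set (List ℕ)) (τ : List ℕ) : Prop :=
  τ ∈ T ∧ ∀ a : ℕ, τ ++ [a] ∉ T

/-- A tree `T` is `h`-bushy above `σ`: `σ ∈ T`, every element of `T` is comparable
with `σ`, and every non-leaf `τ ∈ T` extending `σ` has at least `h |τ|` immediate
extensions in `T`. -/
def BushyAbove (h : ℕ → ℕ) (σ : List ℕ) (T : Set (List ℕ)) : Prop :=
  IsTree T ∧ σ ∈ T ∧
  (∀ τ ∈ T, τ <+: σ ∨ σ <+: τ) ∧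
  (∀ τ ∈ T, σ <+: τ → ¬ IsLeaf T τ → (h τ.length : ℕ∞) ≤ {a : ℕ | τ ++ [a] ∈ T}.encard)

/-- `B` is `h`-big above `σ` if there is a finite tree, `h`-bushy above `σ`,
all of whose leaves belong to `B`. -/
def BigAbove (h : ℕ → ℕ) (σ : List ℕ) (B : Set (List ℕ)) : Prop :=
  ∃ T : Set (List ℕ), T.Finite ∧ BushyAbove h σ T ∧ ∀ τ, IsLeaf T τ → τ ∈ B

/-- `B` is `h`-small above `σ` if it is not `h`-big above `σ`. -/
def SmallAbove (h : ℕ → ℕ) (σ : List ℕ) (B : Set (List ℕ)) : Prop :=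
  ¬ BigAbove h σ B

lemma prefixes_finite (σ : List ℕ) : {ρ : List ℕ | ρ <+: σ}.Finite := by
  apply Set.Finite.subset ((Set.finite_Iic σ.length).image σ.take)
  intro ρ hρ
  exact ⟨ρ.length, hρ.length_le, (List.prefix_iff_eq_take.mp hρ).symm⟩

lemma exists_succ_prefix {τ σ : List ℕ} (hpre : τ <+: σ) (hne : τ ≠ σ) :
    ∃ b, τ ++ [b] <+: σ := by
  obtain ⟨t, ht⟩ := hpre
  cases t with
  | nil => exact absurd (by simpa using ht) hne
  | cons b t' => exact ⟨b, t', by simpa using ht⟩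

lemma big_of_mem {g : ℕ → ℕ} {σ : List ℕ} {B : Set (List ℕ)} (hσ : σ ∈ B) :
    BigAbove g σ B := by
  refine ⟨{ρ | ρ <+: σ}, prefixes_finite σ, ⟨?_, List.prefix_refl σ, fun τ hτ => Or.inl hτ, ?_⟩, ?_⟩
  · intro ρ hρ τ hτ; exact hτ.trans hρ
  · intro τ hτ hστ hleaf
    exfalso; apply hleaf
    refine ⟨hτ, fun a ha => ?_⟩
    have hτσ : τ = σ := hτ.eq_of_length (le_antisymm hτ.length_le hστ.length_le)
    subst hτσ
    have := List.IsPrefix.length_le ha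
    simp at this
  · rintro τ ⟨hτ, hleaf⟩
    rcases eq_or_ne τ σ with rfl | hne
    · exact hσ
    · obtain ⟨b, hb⟩ := exists_succ_prefix hτ hne
      exact absurd hb (hleaf b)

lemma small_not_mem {g : ℕ → ℕ} {σ : List ℕ} {B : Set (List ℕ)}
    (hs : SmallAbove g σ B) : σ ∉ B := fun hσ => hs (big_of_mem hσ)

lemma big_glue (g : ℕ → ℕ) (σ : List ℕ) (B : Set (List ℕ)) (hg1 : 1 ≤ g σ.length)
    (A : Finset ℕ) (hA : g σ.length ≤ A.card)
    (hbig : ∀ a ∈ A, BigAbove g (σ ++ [a]) B) : BigAbove g σ B := by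
  classical
  have hbig' : ∀ a : ℕ, ∃ Ta : Set (List ℕ), a ∈ A →
      Ta.Finite ∧ BushyAbove g (σ ++ [a]) Ta ∧ ∀ τ, IsLeaf Ta τ → τ ∈ B := by
    intro a
    by_cases h : a ∈ A
    · obtain ⟨Ta, h1, h2, h3⟩ := hbig a h
      exact ⟨Ta, fun _ => ⟨h1, h2, h3⟩⟩
    · exact ⟨∅, fun h' => absurd h' h⟩
  choose F hF using hbig'
  set T' : Set (List ℕ) := {ρ | ρ <+: σ} ∪ ⋃ a ∈ A, F a with hT'def
  have hmem : ∀ ρ : List ℕ, ρ ∈ T' ↔ (ρ <+: σ ∨ ∃ a ∈ A, ρ ∈ F a) := by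
    intro ρ; simp [hT'def]
  have hFsub : ∀ a ∈ A, F a ⊆ T' := by
    intro a ha ρ hρ
    exact (hmem ρ).mpr (Or.inr ⟨a, ha, hρ⟩)
  -- every element of F a is either a prefix of σ or extends σ ++ [a]
  have hkey : ∀ a ∈ A, ∀ ρ ∈ F a, ρ <+: σ ∨ σ ++ [a] <+: ρ := by
    intro a ha ρ hρ
    rcases (hF a ha).2.1.2.2.1 ρ hρ with hc | hc
    · rcases List.prefix_concat_iff.mp hc with rfl | h
      · exact Or.inr (List.prefix_refl _)
      · exact Or.inl h
    · exact Or.inr hc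
  -- extensions in T' of nodes extending σ ++ [a] stay in F a
  have hsub : ∀ a ∈ A, ∀ τ : List ℕ, σ ++ [a] <+: τ → ∀ b : ℕ,
      τ ++ [b] ∈ T' → τ ++ [b] ∈ F a := by
    intro a ha τ hpre b hb
    have hlen : σ.length + 1 ≤ τ.length := by
      have := hpre.length_le; simpa using this
    rcases (hmem _).mp hb with hp | ⟨a', ha', hmem'⟩
    · exfalso
      have := hp.length_le; simp at this; omega
    · rcases hkey a' ha' _ hmem' with hp | hp
      · exfalso
        have := hp.length_le; simp at this; omega
      · have h1 : σ ++ [a] <+: τ ++ [b] := hpre.trans (List.prefix_append τ [b])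
        have heq : σ ++ [a'] = σ ++ [a] := by
          rcases List.prefix_or_prefix_of_prefix hp h1 with h | h
          · exact h.eq_of_length (by simp)
          · exact (h.eq_of_length (by simp)).symm
        have : a' = a := by simpa using heq
        subst this
        exact hmem'
  -- leaves that are prefixes of σ cannot exist
  have hApos : A.Nonempty := Finset.card_pos.mp (lt_of_lt_of_le hg1 hA)
  have hprefleaf : ∀ τ : List ℕ, τ <+: σ → ¬ IsLeaf T' τ := by
    rintro τ hτ ⟨_, hnoext⟩
    rcases eq_or_ne τ σ with rfl | hne
    · obtain ⟨a, ha⟩ := hApos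
      exact hnoext a (hFsub a ha (hF a ha).2.1.2.1)
    · obtain ⟨b, hb⟩ := exists_succ_prefix hτ hne
      exact hnoext b ((hmem _).mpr (Or.inl hb))
  refine ⟨T', ?_, ⟨?_, (hmem σ).mpr (Or.inl (List.prefix_refl σ)), ?_, ?_⟩, ?_⟩
  · exact Set.Finite.union (prefixes_finite σ)
      (A.finite_toSet.biUnion (fun a ha => (hF a ha).1))
  · -- IsTree
    intro ρ hρ τ hτ
    rcases (hmem ρ).mp hρ with hp | ⟨a, ha, hmem'⟩
    · exact (hmem τ).mpr (Or.inl (hτ.trans hp))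
    · exact hFsub a ha ((hF a ha).2.1.1 ρ hmem' τ hτ)
  · -- comparability
    intro τ hτ
    rcases (hmem τ).mp hτ with hp | ⟨a, ha, hmem'⟩
    · exact Or.inl hp
    · rcases hkey a ha τ hmem' with hp | hp
      · exact Or.inl hp
      · exact Or.inr ((List.prefix_append σ [a]).trans hp)
  · -- bushiness
    intro τ hτ hστ hleaf
    have hcase : τ = σ ∨ ∃ a ∈ A, σ ++ [a] <+: τ ∧ τ ∈ F a := by
      rcases (hmem τ).mp hτ with hp | ⟨a, ha, hmem'⟩
      · exact Or.inl (hp.eq_of_length (le_antisymm hp.length_le hστ.length_le))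
      · rcases hkey a ha τ hmem' with hp | hp
        · exact Or.inl (hp.eq_of_length (le_antisymm hp.length_le hστ.length_le))
        · exact Or.inr ⟨a, ha, hp, hmem'⟩
    rcases hcase with rfl | ⟨a, ha, hpre, hmemFa⟩
    · calc (g τ.length : ℕ∞) ≤ (A.card : ℕ∞) := Nat.cast_le.mpr hA
        _ = (↑A : Set ℕ).encard := (Set.encard_coe_eq_coe_finsetCard A).symm
        _ ≤ _ := Set.encard_mono (fun a ha => hFsub a ha (hF a ha).2.1.2.1)
    · have hnl : ¬ IsLeaf (F a) τ := by
        rintro ⟨_, hnoext⟩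
        apply hleaf
        exact ⟨hτ, fun b hb => hnoext b (hsub a ha τ hpre b hb)⟩
      have := (hF a ha).2.1.2.2.2 τ hmemFa hpre hnl
      exact le_trans this (Set.encard_mono (fun b hb => hFsub a ha hb))
  · -- leaves are in B
    rintro τ hleafτ
    have hτ := hleafτ.1
    have hnoext := hleafτ.2
    rcases (hmem τ).mp hτ with hp | ⟨a, ha, hmem'⟩
    · exact absurd hleafτ (hprefleaf τ hp)
    · rcases hkey a ha τ hmem' with hp | hp
      · exact absurd hleafτ (hprefleaf τ hp)
      · by_cases hL : IsLeaf (F a) τ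
        · exact (hF a ha).2.2 τ hL
        · exfalso
          simp only [IsLeaf, not_and, not_forall, not_not] at hL
          obtain ⟨b, hb⟩ := hL hmem'
          exact hnoext b (hFsub a ha hb)

lemma child_bound (g h : ℕ → ℕ) (T : Set (List ℕ)) (B : Set (List ℕ)) (σ : List ℕ)
    (hg : 1 ≤ g σ.length)
    (hexact : {a : ℕ | σ ++ [a] ∈ T}.encard = (h σ.length : ℕ∞))
    (hsmall : SmallAbove g σ B) :
    ((h σ.length - g σ.length : ℕ) : ℕ∞) ≤
      {a : ℕ | σ ++ [a] ∈ T ∧ SmallAbove g (σ ++ [a]) B}.encard := by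
  classical
  set C := {a : ℕ | σ ++ [a] ∈ T} with hC
  set D := {a : ℕ | BigAbove g (σ ++ [a]) B} with hD
  have hbad : (C ∩ D).encard ≤ (g σ.length : ℕ∞) := by
    by_contra hlt
    push_neg at hlt
    have hCfin : C.Finite := by
      rw [← Set.encard_lt_top_iff, hexact]; exact ENat.coe_lt_top _
    have hfin : (C ∩ D).Finite := hCfin.subset Set.inter_subset_left
    have hcard : g σ.length ≤ hfin.toFinset.card := by
      rw [Set.Finite.encard_eq_coe_toFinset_card hfin] at hlt
      exact_mod_cast hlt.le
    obtain ⟨A, hAsub, hAcard⟩ := Finset.exists_subset_card_eq hcard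
    apply hsmall
    apply big_glue g σ B hg A (le_of_eq hAcard.symm)
    intro a ha
    exact (hfin.mem_toFinset.mp (hAsub ha)).2
  have heq : {a : ℕ | σ ++ [a] ∈ T ∧ SmallAbove g (σ ++ [a]) B} = C \ D := rfl
  rw [heq]
  have key := Set.encard_diff_add_encard_inter C D
  have hle : (h σ.length : ℕ∞) ≤ (C \ D).encard + (g σ.length : ℕ∞) := by
    rw [← hexact, ← key]
    exact add_le_add (le_refl _) hbad
  calc ((h σ.length - g σ.length : ℕ) : ℕ∞)
      = (h σ.length : ℕ∞) - (g σ.length : ℕ∞) := by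
        exact_mod_cast ENat.coe_sub _ _
    _ ≤ (C \ D).encard := tsub_le_iff_right.mpr hle

/-- Counting form of the random-walk lemma: in a tree where every node of length `i`
has exactly `h i` immediate extensions, if `B` is `g`-small above the empty string
(with `1 ≤ g ≤ h`), then at each level `n` there are at least `∏ i < n, (h i - g i)`
nodes none of whose prefixes belong to `B`. -/
theorem random_walk_counting (g h : ℕ → ℕ) (hg : ∀ n, 1 ≤ g n) (hgh : ∀ n, g n ≤ h n)
    (T : Set (List ℕ)) (hTtree : IsTree T) (hnil : ([] : List ℕ) ∈ T)
    (hexact : ∀ τ ∈ T, {a : ℕ | τ ++ [a] ∈ T}.encard = (h τ.length : ℕ∞))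
    (B : Set (List ℕ)) (hB : SmallAbove g [] B) (n : ℕ) :
    ((∏ i ∈ Finset.range n, (h i - g i) : ℕ) : ℕ∞) ≤
      {σ : List ℕ | σ ∈ T ∧ σ.length = n ∧ ∀ τ : List ℕ, τ <+: σ → τ ∉ B}.encard := by
  classical
  suffices h' : ∃ S : Finset (List ℕ),
      (∀ σ ∈ S, σ ∈ T ∧ σ.length = n ∧ SmallAbove g σ B ∧ ∀ τ : List ℕ, τ <+: σ → τ ∉ B) ∧
      (∏ i ∈ Finset.range n, (h i - g i)) ≤ S.card by
    obtain ⟨S, hS, hcard⟩ := h'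
    calc ((∏ i ∈ Finset.range n, (h i - g i) : ℕ) : ℕ∞)
        ≤ (S.card : ℕ∞) := Nat.cast_le.mpr hcard
      _ = (↑S : Set (List ℕ)).encard := (Set.encard_coe_eq_coe_finsetCard S).symm
      _ ≤ _ := Set.encard_mono (fun σ hσ => by
          obtain ⟨h1, h2, _, h4⟩ := hS σ hσ
          exact ⟨h1, h2, h4⟩)
  induction n with
  | zero =>
      refine ⟨{[]}, ?_, by simp⟩
      intro σ hσ
      rw [Finset.mem_singleton] at hσ
      subst hσ
      refine ⟨hnil, rfl, hB, ?_⟩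
      intro τ hτ
      rw [List.prefix_nil] at hτ
      subst hτ
      exact small_not_mem hB
  | succ n ih =>
      obtain ⟨S, hS, hcard⟩ := ih
      have hch : ∀ σ : List ℕ, ∃ Aσ : Finset ℕ, σ ∈ S →
          (∀ a ∈ Aσ, σ ++ [a] ∈ T ∧ SmallAbove g (σ ++ [a]) B) ∧ h n - g n ≤ Aσ.card := by
        intro σ
        by_cases hσ : σ ∈ S
        · obtain ⟨hσT, hlen, hsm, _⟩ := hS σ hσ
          have hb := child_bound g h T B σ (hg _) (hexact σ hσT) hsm
          rw [hlen] at hb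
          have hfin : {a : ℕ | σ ++ [a] ∈ T ∧ SmallAbove g (σ ++ [a]) B}.Finite := by
            apply Set.Finite.subset (s := {a | σ ++ [a] ∈ T}) ?_ (fun a ha => ha.1)
            rw [← Set.encard_lt_top_iff, hexact σ hσT]
            exact ENat.coe_lt_top _
          refine ⟨hfin.toFinset, fun _ => ⟨fun a ha => hfin.mem_toFinset.mp ha, ?_⟩⟩
          rw [Set.Finite.encard_eq_coe_toFinset_card hfin] at hb
          exact_mod_cast hb
        · exact ⟨∅, fun h' => absurd h' hσ⟩
      choose cA hcA using hch
      refine ⟨S.biUnion (fun σ => (cA σ).image (fun a => σ ++ [a])), ?_, ?_⟩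
      · intro ρ hρ
        rw [Finset.mem_biUnion] at hρ
        obtain ⟨σ, hσ, hρ⟩ := hρ
        rw [Finset.mem_image] at hρ
        obtain ⟨a, ha, rfl⟩ := hρ
        obtain ⟨hmemT, hsm⟩ := (hcA σ hσ).1 a ha
        obtain ⟨_, hlen, _, hpref⟩ := hS σ hσ
        refine ⟨hmemT, by simp [hlen], hsm, ?_⟩
        intro τ hτ
        rcases List.prefix_concat_iff.mp hτ with rfl | hτσ
        · exact small_not_mem hsm
        · exact hpref τ hτσ
      · have hdisj : ∀ σ₁ ∈ S, ∀ σ₂ ∈ S, σ₁ ≠ σ₂ →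
            Disjoint ((cA σ₁).image (fun a => σ₁ ++ [a])) ((cA σ₂).image (fun a => σ₂ ++ [a])) := by
          intro σ₁ h₁ σ₂ h₂ hne
          rw [Finset.disjoint_left]
          intro ρ hm₁ hm₂
          rw [Finset.mem_image] at hm₁ hm₂
          obtain ⟨a₁, _, rfl⟩ := hm₁
          obtain ⟨a₂, _, he⟩ := hm₂
          exact hne ((List.append_inj' he rfl).1.symm)
        rw [Finset.card_biUnion hdisj]
        have himgcard : ∀ σ ∈ S, ((cA σ).image (fun a => σ ++ [a])).card = (cA σ).card := by
          intro σ hσ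
          apply Finset.card_image_of_injective
          intro a b hab
          simpa using List.append_cancel_left hab
        calc ∏ i ∈ Finset.range (n + 1), (h i - g i)
            = (∏ i ∈ Finset.range n, (h i - g i)) * (h n - g n) := Finset.prod_range_succ _ _
          _ ≤ S.card * (h n - g n) := Nat.mul_le_mul_right _ hcard
          _ = ∑ _σ ∈ S, (h n - g n) := by rw [Finset.sum_const, smul_eq_mul]
          _ ≤ ∑ σ ∈ S, ((cA σ).image (fun a => σ ++ [a])).card := by
              apply Finset.sum_le_sum
              intro σ hσ
              rw [himgcard σ hσ]
              exact (hcA σ hσ).2
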